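/- Let β = log₂(3/2). For fixed α ≥ 0 and z ≥ 0, the function γ ↦ ((α − γ)^{1/β} + z^{1/β})^β + γ is nondecreasing in γ on [0, α]. -/
import Mathlib


noncomputable def β : ℝ := Real.logb 2 (3/2)

theorem mono_in_gamma (α z : ℝ) (hα : 0 ≤ α) (hz : 0 ≤ z) :
    MonotoneOn (fun γ : ℝ => ((α - γ) ^ (1/β) + z ^ (1/β)) ^ β + γ)
      (Set.Icc 0 α) := by
  have hβ0 : 0 < β := Real.logb_pos one_lt_two (by norm_num)
  have hβ1 : β < 1 := by
    calc β < Real.logb 2 2 := Real.logb_lt_logb one_lt_two (by norm_num) (by norm_num)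
    _ = 1 := by simp
  have hp1 : 1 ≤ 1 / β := by rw [le_div_iff₀ hβ0]; linarith
  intro x hx y hy hxy
  simp only [Set.mem_Icc] at hx hy
  have h1 : 0 ≤ α - y := by linarith [hy.2]
  have h2 : 0 ≤ y - x := by linarith
  simp only
  -- key: Minkowski inequality with vectors ![y - x, 0] and ![α - y, z]
  have key := Real.Lp_add_le_of_nonneg (s := (Finset.univ : Finset (Fin 2)))
      (f := ![y - x, 0]) (g := ![α - y, z]) hp1
      (by intro i _; fin_cases i <;> simp [h2])
      (by intro i _; fin_cases i <;> simp [h1, hz])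
  have hinv : 1 / (1 / β) = β := by field_simp
  rw [Fin.sum_univ_two, Fin.sum_univ_two, Fin.sum_univ_two] at key
  simp only [Matrix.cons_val_zero, Matrix.cons_val_one, Matrix.head_cons] at key
  have hzero : (0 : ℝ) ^ (1 / β) = 0 := Real.zero_rpow (by positivity)
  rw [hzero, add_zero, hinv] at key
  have hyx : ((y - x) ^ (1 / β)) ^ β = y - x := by
    rw [← Real.rpow_mul h2, one_div, inv_mul_cancel₀ hβ0.ne', Real.rpow_one]
  have hsum1 : y - x + (α - y) = α - x := by ring
  have hsum2 : (0 : ℝ) + z = z := by ring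
  rw [hyx, hsum1, hsum2] at key
  linarith
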